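/- Suppose α ≥ α' and β ≥ β' with at least one inequality strict, ordeals only are used (p ≡ 0), and the mechanism (x, 0, q) is incentive compatible for the utility U[α,β;x,q] = v(β,x) − z(α,q), where v has strictly increasing differences in (β,x), z has strictly decreasing differences in (α,q), and v_x, z_q > 0. Then x(α,β) ≥ x(α',β'). -/
import Mathlib


open Set

/-- Monotonicity: with ordeals only, under an IC mechanism for utility
`v(β,x) − z(α,q)` with single-crossing, the allocation is componentwise monotone. -/
theorem stmt9
    (Θ : Set (ℝ × ℝ))
    (v z : ℝ → ℝ → ℝ)
    (hvC2 : ContDiff ℝ 2 (Function.uncurry v)) (hzC2 : ContDiff ℝ 2 (Function.uncurry z))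
    (hvx : ∀ β x : ℝ, 0 < deriv (v β) x)
    (hzq : ∀ α q : ℝ, 0 < deriv (z α) q)
    -- strictly increasing differences of v in (β,x)
    (hvid : ∀ β₂ β₁ x₂ x₁ : ℝ, β₂ < β₁ → x₂ < x₁ →
      v β₂ x₁ - v β₂ x₂ < v β₁ x₁ - v β₁ x₂)
    -- strictly decreasing differences of z in (α,q)
    (hzdd : ∀ α₂ α₁ q₂ q₁ : ℝ, α₂ < α₁ → q₂ < q₁ →
      z α₁ q₁ - z α₁ q₂ < z α₂ q₁ - z α₂ q₂)
    (hv0 : ∀ β, v β 0 = 0) (hz0 : ∀ α, z α 0 = 0)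
    (x q : ℝ × ℝ → ℝ)
    (hxrange : ∀ θ ∈ Θ, x θ ∈ Icc (0:ℝ) 1)
    (hqpos : ∀ θ ∈ Θ, 0 ≤ q θ)
    -- IC with p ≡ 0
    (hIC : ∀ θ ∈ Θ, ∀ θ' ∈ Θ,
      v θ.2 (x θ) - z θ.1 (q θ) ≥ v θ.2 (x θ') - z θ.1 (q θ'))
    (α α' β β' : ℝ) (hmem : (α, β) ∈ Θ) (hmem' : (α', β') ∈ Θ)
    (hα : α' ≤ α) (hβ : β' ≤ β) (hstrict : α' < α ∨ β' < β) :
    x (α', β') ≤ x (α, β) := by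
  by_contra hcon
  push_neg at hcon
  set x1 := x (α, β) with hx1
  set x2 := x (α', β') with hx2
  set q1 := q (α, β) with hq1
  set q2 := q (α', β') with hq2
  have hvmono : ∀ b, StrictMono (v b) := fun b => strictMono_of_deriv_pos (hvx b)
  have hzmono : ∀ a, StrictMono (z a) := fun a => strictMono_of_deriv_pos (hzq a)
  have IC1 : v β x1 - z α q1 ≥ v β x2 - z α q2 := hIC (α, β) hmem (α', β') hmem'
  have IC2 : v β' x2 - z α' q2 ≥ v β' x1 - z α' q1 := hIC (α', β') hmem' (α, β) hmem
  have hvlt : v β x1 < v β x2 := hvmono β hcon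
  have hq12 : q1 < q2 := by
    have h1 : z α q1 < z α q2 := by linarith
    exact (hzmono α).lt_iff_lt.mp h1
  rcases eq_or_lt_of_le hα with heq | hαlt
  · -- α' = α, so β' < β
    have hβ' : β' < β := by
      rcases hstrict with h | h
      · exact absurd heq h.ne
      · exact h
    have hv := hvid β' β x1 x2 hβ' hcon
    rw [heq] at IC2
    linarith
  · have hz := hzdd α' α q1 q2 hαlt hq12
    rcases eq_or_lt_of_le hβ with heqβ | hβlt
    · rw [heqβ] at IC2
      linarith
    · have hv := hvid β' β x1 x2 hβlt hcon
      linarith
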